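/- Let Δx > 0 and let p be the unique quadratic polynomial satisfying (1/Δx)∫_{x_{i-1}-Δx/2}^{x_{i-1}+Δx/2} p = f_{i-1}, (1/Δx)∫_{x_i-Δx/2}^{x_i+Δx/2} p = f_i, and (1/Δx)∫_{x_i-Δx/2}^{x_i+Δx/2} p' = h_i, where x_{i-1} = x_i - Δx. Then p(x_i + Δx/2) = (1/6) f_{i-1} + (5/6) f_i + (2/3) Δx h_i. -/

import Mathlib

open intervalIntegral

theorem stmt_0 (Δx xi fim1 fi hi : ℝ) (hΔ : 0 < Δx)
    (p : Polynomial ℝ) (hdeg : p.natDegree ≤ 2)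
    (h1 : (1 / Δx) * ∫ x in ((xi - Δx) - Δx / 2)..((xi - Δx) + Δx / 2), p.eval x = fim1)
    (h2 : (1 / Δx) * ∫ x in (xi - Δx / 2)..(xi + Δx / 2), p.eval x = fi)
    (h3 : (1 / Δx) * ∫ x in (xi - Δx / 2)..(xi + Δx / 2), (Polynomial.derivative p).eval x = hi) :
    p.eval (xi + Δx / 2) = (1 / 6) * fim1 + (5 / 6) * fi + (2 / 3) * Δx * hi := by
  set a := p.coeff 0
  set b := p.coeff 1
  set c := p.coeff 2
  have hev : ∀ x : ℝ, p.eval x = a + b * x + c * x ^ 2 := by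
    intro x
    rw [Polynomial.eval_eq_sum_range' (lt_of_le_of_lt hdeg (by norm_num : (2:ℕ) < 3))]
    simp [Finset.sum_range_succ]
    rfl
  -- antiderivative
  have hP : ∀ x : ℝ, HasDerivAt (fun x : ℝ => a * x + b * x ^ 2 / 2 + c * x ^ 3 / 3)
      (p.eval x) x := by
    intro x
    rw [hev x]
    have h1' : HasDerivAt (fun x : ℝ => a * x) a x := by
      simpa using (hasDerivAt_id x).const_mul a
    have h2' : HasDerivAt (fun x : ℝ => b * x ^ 2 / 2) (b * x) x := by
      have := ((hasDerivAt_pow 2 x).const_mul b).div_const 2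
      simpa using this.congr_deriv (by ring)
    have h3' : HasDerivAt (fun x : ℝ => c * x ^ 3 / 3) (c * x ^ 2) x := by
      have := ((hasDerivAt_pow 3 x).const_mul c).div_const 3
      simpa using this.congr_deriv (by ring)
    exact (h1'.add h2').add h3'
  have hint : ∀ s t : ℝ, (∫ x in s..t, p.eval x)
      = (a * t + b * t ^ 2 / 2 + c * t ^ 3 / 3) - (a * s + b * s ^ 2 / 2 + c * s ^ 3 / 3) := by
    intro s t
    exact integral_eq_sub_of_hasDerivAt (fun x _ => hP x)
      ((p.continuous_aeval).intervalIntegrable s t)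
  have hintd : (∫ x in (xi - Δx / 2)..(xi + Δx / 2), (Polynomial.derivative p).eval x)
      = p.eval (xi + Δx / 2) - p.eval (xi - Δx / 2) := by
    exact integral_eq_sub_of_hasDerivAt (fun x _ => p.hasDerivAt x)
      (((Polynomial.derivative p).continuous_aeval).intervalIntegrable _ _)
  rw [hint] at h1 h2
  rw [hintd] at h3
  rw [hev, hev] at h3
  rw [hev]
  have hΔ' : Δx ≠ 0 := ne_of_gt hΔ
  field_simp at h1 h2 h3 ⊢
  nlinarith [h1, h2, h3, sq_nonneg Δx]
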